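/- Let V = ⟨V_a⟩ be an open complete Souslin scheme on a topological space (X,τ) that covers X, and let f be a selector on V such that p →_{V,τ} x for all x ∈ X and all p ∈ f⁻¹(x). Then the standard Lusin scheme S is a Lusin π-base for the space (ω^ω, σ_{τ,f}). -/

import Mathlib

open Set Topology

universe u v

/-- The restriction `p↾n` of `p : ℕ → ℕ`, as a finite sequence in `ω^{<ω}`. -/
def pre (p : ℕ → ℕ) (n : ℕ) : List ℕ := List.ofFn fun i : Fin n => p i

/-- `a ⊑ p` : the finite sequence `a` is an initial segment of the branch `p`. -/
def IsPre (a : List ℕ) (p : ℕ → ℕ) : Prop := a = pre p a.length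

/-- `S_a = {p ∈ ω^ω : a ⊑ p}`, the pieces of the standard Lusin scheme. -/
def stdS (a : List ℕ) : Set (ℕ → ℕ) := {p | IsPre a p}

section scheme

variable {X Y : Type*}

/-- `fruit_p(V) = ⋂_n V_{p↾n}`. -/
def fruit (V : List ℕ → Set X) (p : ℕ → ℕ) : Set X := ⋂ n, V (pre p n)

/-- `flesh(V) = ⋃_a V_a`. -/
def flesh (V : List ℕ → Set X) : Set X := ⋃ a, V a

/-- The Souslin scheme `V` covers the set `A`. -/
def Covers (V : List ℕ → Set X) (A : Set X) : Prop :=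
  V [] = A ∧ ∀ a, V a = ⋃ n, V (a ++ [n])

/-- The Souslin scheme `V` partitions the set `A`. -/
def Partitions (V : List ℕ → Set X) (A : Set X) : Prop :=
  Covers V A ∧ ∀ a, ∀ n m : ℕ, n ≠ m → V (a ++ [n]) ∩ V (a ++ [m]) = ∅

/-- `V` is complete: every fruit is nonempty. -/
def CompleteScheme (V : List ℕ → Set X) : Prop := ∀ q : ℕ → ℕ, (fruit V q).Nonempty

/-- `V` has strict branches: every fruit is a singleton. -/
def StrictBranches (V : List ℕ → Set X) : Prop := ∀ q : ℕ → ℕ, ∃ x, fruit V q = {x}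

/-- `V` is regular: `V_{a⌢n} ⊆ V_a`. -/
def RegularScheme (V : List ℕ → Set X) : Prop := ∀ a n, V (a ++ [n]) ⊆ V a

/-- `V` has nonempty leaves. -/
def NonemptyLeaves (V : List ℕ → Set X) : Prop := ∀ a, (V a).Nonempty

/-- `V` is an open Souslin scheme with respect to the topology `t`. -/
def OpenScheme (t : TopologicalSpace X) (V : List ℕ → Set X) : Prop := ∀ a, t.IsOpen (V a)

/-- `V` is semi-open with respect to the topology `t`: `V_a ⊆ Cl_t(Int_t(V_a))`. -/
def SemiOpenScheme (t : TopologicalSpace X) (V : List ℕ → Set X) : Prop :=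
  ∀ a, V a ⊆ @closure _ t (@interior _ t (V a))

/-- `Ṽ^k_b = ⋃_{j ≥ k} V_{b⌢j}`. -/
def shootSet (V : List ℕ → Set X) (b : List ℕ) (k : ℕ) : Set X :=
  ⋃ j, ⋃ (_ : k ≤ j), V (b ++ [j])

/-- `shoot_b(V) = {Ṽ^k_b : k ∈ ω}`. -/
def shoot (V : List ℕ → Set X) (b : List ℕ) : Set (Set X) := {G | ∃ k, G = shootSet V b k}

/-- `γ → U`: some member of the family `γ` is contained in `U`. -/
def Engulfs (γ : Set (Set X)) (U : Set X) : Prop := ∃ G ∈ γ, G ⊆ U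

/-- `p →_V U`: there is an infinite `L ⊆ ω` with `shoot_{p↾n}(V) → U` for all `n ∈ L`. -/
def ArrowSeq (V : List ℕ → Set X) (p : ℕ → ℕ) (U : Set X) : Prop :=
  ∃ L : Set ℕ, L.Infinite ∧ ∀ n ∈ L, Engulfs (shoot V (pre p n)) U

/-- `p →_{V,t} x`: `p →_V U` for every `t`-open `U` containing `x`. -/
def ArrowPt (t : TopologicalSpace X) (V : List ℕ → Set X) (p : ℕ → ℕ) (x : X) : Prop :=
  ∀ U : Set X, t.IsOpen U → x ∈ U → ArrowSeq V p U

/-- `V` is a Lusin π-base for `(X, t)`. -/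
def LusinPiBase (t : TopologicalSpace X) (V : List ℕ → Set X) : Prop :=
  OpenScheme t V ∧ Partitions V Set.univ ∧ StrictBranches V ∧
    ∀ x : X, ∀ U : Set X, t.IsOpen U → x ∈ U →
      ∃ a : List ℕ, ∃ n : ℕ, x ∈ V a ∧ shootSet V a n ⊆ U

/-- `V` is an α-scheme for `(X, t)`. -/
def AlphaScheme (t : TopologicalSpace X) (V : List ℕ → Set X) : Prop :=
  OpenScheme t V ∧ CompleteScheme V ∧ Covers V Set.univ ∧
    (∀ a : List ℕ, ∀ x ∈ V a, ∃ p : ℕ → ℕ, IsPre a p ∧ x ∈ fruit V p ∧ ArrowPt t V p x) ∧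
    (∀ p : ℕ → ℕ, ∃ x ∈ fruit V p, ArrowPt t V p x)

/-- `V` is a ramose α-scheme for `(X, t)`. -/
def RamoseAlphaScheme (t : TopologicalSpace X) (V : List ℕ → Set X) : Prop :=
  AlphaScheme t V ∧ ∀ a : List ℕ, ∀ x ∈ V a,
    Cardinal.mk {p : ℕ → ℕ // IsPre a p ∧ x ∈ fruit V p ∧ ArrowPt t V p x} = Cardinal.continuum

/-- `γ` is a π-base for `(X, t)`. -/
def PiBase (t : TopologicalSpace X) (γ : Set (Set X)) : Prop :=
  (∀ G ∈ γ, G.Nonempty ∧ t.IsOpen G) ∧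
    ∀ U : Set X, t.IsOpen U → U.Nonempty → ∃ G ∈ γ, G ⊆ U

/-- `γ` is a π-net for the subspace `A` of `(X, t)`. -/
def PiNetFor (t : TopologicalSpace X) (γ : Set (Set X)) (A : Set X) : Prop :=
  (∀ G ∈ γ, G.Nonempty) ∧
    ∀ U : Set X, t.IsOpen U → (U ∩ A).Nonempty → ∃ G ∈ γ, G ⊆ U ∩ A

/-- `V` is a π-base Souslin scheme on `(X, t)`:
an open scheme such that `{V_b : a ⊑ b}` is a π-net for the subspace `V_a`, for each `a`. -/
def PiBaseScheme (t : TopologicalSpace X) (V : List ℕ → Set X) : Prop :=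
  OpenScheme t V ∧ ∀ a, PiNetFor t {S | ∃ b, a <+: b ∧ S = V b} (V a)

/-- `(X, t)` is a π-space. -/
def PiSpace (t : TopologicalSpace X) : Prop :=
  ∃ V : List ℕ → Set X, OpenScheme t V ∧ Partitions V Set.univ ∧ StrictBranches V ∧
    PiBase t {S | ∃ a, S = V a}

/-- `(X, t)` is zero-dimensional: it has a base consisting of clopen sets. -/
def ZeroDimT (t : TopologicalSpace X) : Prop :=
  ∀ U : Set X, t.IsOpen U → ∀ x ∈ U, ∃ C : Set X, t.IsOpen C ∧ @IsClosed _ t C ∧ x ∈ C ∧ C ⊆ U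

/-- `branches_V(x) = {q ∈ ω^ω : x ∈ fruit_q(V)}`. -/
def branches (V : List ℕ → Set X) (x : X) : Set (ℕ → ℕ) := {q | x ∈ fruit V q}

/-- `f` is a selector on `V`: a surjection of `ω^ω` onto `flesh(V)` such that each fiber
`f⁻¹(x)` is a dense subset of the subspace `branches_V(x)` of the Baire space. -/
def IsSelector (V : List ℕ → Set X) (f : (ℕ → ℕ) → X) : Prop :=
  (∀ p, f p ∈ flesh V) ∧ (∀ x ∈ flesh V, ∃ p, f p = x) ∧
    ∀ x ∈ flesh V, f ⁻¹' {x} ⊆ branches V x ∧ branches V x ⊆ closure (f ⁻¹' {x})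

/-- The topology `σ_{t,f}` on `ω^ω` generated by the subbase
`{f⁻¹[U] : U ∈ t} ∪ {S_a : a ∈ ω^{<ω}}`. -/
def sigmaTop (t : TopologicalSpace X) (f : (ℕ → ℕ) → X) : TopologicalSpace (ℕ → ℕ) :=
  TopologicalSpace.generateFrom
    ({S | ∃ U : Set X, t.IsOpen U ∧ S = f ⁻¹' U} ∪ {S | ∃ a : List ℕ, S = stdS a})

end scheme

/-- `(ω^ω, t)` is a standard π-space: the family `τ_N \ {∅}` of nonempty open sets of the
Baire space is a π-base for `(ω^ω, t)`. -/
def StandardPiSpace (t : TopologicalSpace (ℕ → ℕ)) : Prop :=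
  (∀ U : Set (ℕ → ℕ), IsOpen U → U.Nonempty → t.IsOpen U) ∧
    ∀ U : Set (ℕ → ℕ), t.IsOpen U → U.Nonempty → ∃ G : Set (ℕ → ℕ), IsOpen G ∧ G.Nonempty ∧ G ⊆ U

lemma pre_length (p : ℕ → ℕ) (n : ℕ) : (pre p n).length = n := List.length_ofFn

lemma pre_get (p : ℕ → ℕ) (n i : ℕ) (h : i < (pre p n).length) :
    (pre p n).get ⟨i, h⟩ = p i := by
  simp [pre, List.get_ofFn]

lemma isPre_iff {a : List ℕ} {p : ℕ → ℕ} :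
    IsPre a p ↔ ∀ i (h : i < a.length), a.get ⟨i, h⟩ = p i := by
  constructor
  · intro h i hi
    exact (List.get_of_eq h ⟨i, hi⟩).trans (pre_get p a.length i _)
  · intro h
    apply List.ext_get (by simp [IsPre, pre_length, pre])
    intro i h1 h2
    rw [h i h1]
    exact (pre_get p a.length i h2).symm

lemma isPre_nil (p : ℕ → ℕ) : IsPre [] p := by simp [IsPre, pre]

lemma isPre_pre (p : ℕ → ℕ) (n : ℕ) : IsPre (pre p n) p := by
  rw [isPre_iff]; intro i hi; exact pre_get p n i hi

lemma pre_succ (p : ℕ → ℕ) (n : ℕ) : pre p (n + 1) = pre p n ++ [p n] := by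
  show List.ofFn _ = _
  rw [List.ofFn_succ']
  simp [pre, List.concat_eq_append]

lemma isPre_append {a : List ℕ} {n : ℕ} {q : ℕ → ℕ} :
    IsPre (a ++ [n]) q ↔ IsPre a q ∧ q a.length = n := by
  unfold IsPre
  rw [List.length_append, List.length_singleton, pre_succ]
  constructor
  · intro h
    obtain ⟨h1, h2⟩ := List.append_inj' h (by simp)
    refine ⟨h1, ?_⟩
    simpa using h2.symm
  · rintro ⟨h1, h2⟩
    rw [← h1, h2]

lemma isPre_of_isPre {a b : List ℕ} {p q : ℕ → ℕ}
    (hb : IsPre b p) (ha : IsPre a p) (hlen : b.length ≤ a.length) (haq : IsPre a q) :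
    IsPre b q := by
  rw [isPre_iff] at *
  intro i hi
  rw [hb i hi, ← ha i (lt_of_lt_of_le hi hlen), haq i (lt_of_lt_of_le hi hlen)]

lemma mem_shootSet_stdS {a : List ℕ} {k : ℕ} {q : ℕ → ℕ} :
    q ∈ shootSet stdS a k ↔ IsPre a q ∧ k ≤ q a.length := by
  simp only [shootSet, mem_iUnion, stdS, mem_setOf_eq]
  constructor
  · rintro ⟨j, hj, hq⟩
    obtain ⟨h1, h2⟩ := isPre_append.mp hq
    exact ⟨h1, h2 ▸ hj⟩
  · rintro ⟨h1, h2⟩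
    exact ⟨q a.length, h2, isPre_append.mpr ⟨h1, rfl⟩⟩


/-- If `V` is an open complete Souslin scheme on `(X,τ)` covering `X` and `f` is a selector on
`V` with `p →_{V,τ} x` for all `x` and all `p ∈ f⁻¹(x)`, then the standard Lusin scheme `S`
is a Lusin π-base for `(ω^ω, σ_{τ,f})`. -/
theorem statement9 {X : Type*} [tX : TopologicalSpace X] (V : List ℕ → Set X)
    (hopen : OpenScheme tX V) (hcomp : CompleteScheme V) (hcov : Covers V Set.univ)
    (f : (ℕ → ℕ) → X) (hsel : IsSelector V f)
    (harr : ∀ x : X, ∀ p : ℕ → ℕ, f p = x → ArrowPt tX V p x) :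
    LusinPiBase (sigmaTop tX f) stdS := by
  have key : ∀ U : Set (ℕ → ℕ), (sigmaTop tX f).IsOpen U → ∀ p ∈ U,
      ∃ b W, IsPre b p ∧ tX.IsOpen W ∧ f p ∈ W ∧ stdS b ∩ f ⁻¹' W ⊆ U := by
    intro U hU
    induction hU with
    | basic S hS =>
      intro p hp
      rcases hS with ⟨W, hW, rfl⟩ | ⟨a, rfl⟩
      · exact ⟨[], W, isPre_nil p, hW, hp, fun q hq => hq.2⟩
      · exact ⟨a, univ, hp, tX.isOpen_univ, mem_univ _, fun q hq => hq.1⟩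
    | univ =>
      intro p _
      exact ⟨[], univ, isPre_nil p, tX.isOpen_univ, mem_univ _, fun q _ => mem_univ _⟩
    | inter U1 U2 h1 h2 ih1 ih2 =>
      intro p hp
      obtain ⟨b1, W1, hb1, hW1, hf1, hs1⟩ := ih1 p hp.1
      obtain ⟨b2, W2, hb2, hW2, hf2, hs2⟩ := ih2 p hp.2
      rcases le_total b1.length b2.length with h | h
      · refine ⟨b2, W1 ∩ W2, hb2, tX.isOpen_inter _ _ hW1 hW2, ⟨hf1, hf2⟩, ?_⟩
        rintro q ⟨hq, hqW⟩
        exact ⟨hs1 ⟨isPre_of_isPre hb1 hb2 h hq, hqW.1⟩, hs2 ⟨hq, hqW.2⟩⟩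
      · refine ⟨b1, W1 ∩ W2, hb1, tX.isOpen_inter _ _ hW1 hW2, ⟨hf1, hf2⟩, ?_⟩
        rintro q ⟨hq, hqW⟩
        exact ⟨hs1 ⟨hq, hqW.1⟩, hs2 ⟨isPre_of_isPre hb2 hb1 h hq, hqW.2⟩⟩
    | sUnion S hS ih =>
      intro p hp
      obtain ⟨U, hUS, hpU⟩ := hp
      obtain ⟨b, W, h1, h2, h3, h4⟩ := ih U hUS p hpU
      exact ⟨b, W, h1, h2, h3, h4.trans (subset_sUnion_of_mem hUS)⟩
  refine ⟨?_, ⟨⟨?_, ?_⟩, ?_⟩, ?_, ?_⟩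
  · -- open scheme
    intro a
    exact TopologicalSpace.GenerateOpen.basic _ (Or.inr ⟨a, rfl⟩)
  · -- stdS [] = univ
    ext p; simp [stdS, isPre_nil p]
  · -- covering
    intro a
    ext p
    simp only [stdS, mem_setOf_eq, mem_iUnion]
    constructor
    · intro h
      exact ⟨p a.length, isPre_append.mpr ⟨h, rfl⟩⟩
    · rintro ⟨n, hn⟩
      exact (isPre_append.mp hn).1
  · -- disjoint
    intro a n m hnm
    ext p
    simp only [mem_inter_iff, stdS, mem_setOf_eq, mem_empty_iff_false, iff_false, not_and]
    intro h1 h2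
    exact hnm ((isPre_append.mp h1).2.symm.trans (isPre_append.mp h2).2)
  · -- strict branches
    intro q
    refine ⟨q, ?_⟩
    ext p
    simp only [fruit, mem_iInter, stdS, mem_setOf_eq, mem_singleton_iff]
    constructor
    · intro h
      funext i
      have := (isPre_iff.mp (h (i + 1))) i (by simp [pre_length])
      rw [pre_get q (i + 1) i] at this
      exact this.symm
    · rintro rfl n
      exact isPre_pre _ n
  · -- L6
    intro p U hU hp
    obtain ⟨b, W, hbp, hW, hfW, hsub⟩ := key U hU p hp
    obtain ⟨L, hLinf, hL⟩ := harr (f p) p rfl W hW hfW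
    obtain ⟨m, hmL, hm⟩ := hLinf.exists_gt b.length
    obtain ⟨G, ⟨k, rfl⟩, hGW⟩ := hL m hmL
    refine ⟨pre p m, k, isPre_pre p m, ?_⟩
    intro q hq
    rw [mem_shootSet_stdS] at hq
    obtain ⟨hq1, hq2⟩ := hq
    have hqm : pre q m = pre p m := by
      have := hq1
      unfold IsPre at this
      rw [pre_length] at this
      exact this.symm
    have hfq : f q ∈ fruit V q :=
      ((hsel.2.2 (f q) (hsel.1 q)).1) (by simp)
    have hfqW : f q ∈ W := by
      apply hGW
      have : f q ∈ V (pre q (m + 1)) := mem_iInter.mp hfq (m + 1)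
      rw [pre_succ, hqm] at this
      refine mem_iUnion.mpr ⟨q m, mem_iUnion.mpr ⟨?_, this⟩⟩
      simpa [pre_length] using hq2
    refine hsub ⟨?_, hfqW⟩
    exact isPre_of_isPre hbp (isPre_pre p m) (by simpa [pre_length] using hm.le) hq1
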